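/- (Optimality of PCA for the linear autoencoder, after Baldi–Hornik.) Let X be a real N×n matrix and let μ₁ ≥ μ₂ ≥ ⋯ ≥ μ_n be the eigenvalues of the symmetric positive semidefinite matrix XᵀX listed in non-increasing order. Suppose u₁, …, u_p are orthonormal eigenvectors of XᵀX with (XᵀX) uᵢ = μᵢ uᵢ for i = 1, …, p, and let U_p be the n×p matrix with columns u₁, …, u_p. Then for all real n×p matrices A and B, ‖X − X A Bᵀ‖_F² ≥ ‖X − X U_p U_pᵀ‖_F² = μ_{p+1} + ⋯ + μ_n. That is, the choice A = B = U_p attains the global minimum of the linear autoencoder objective ‖X − X A Bᵀ‖_F². -/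

import Mathlib

open Matrix

/-- The Frobenius norm of a real matrix: square root of the sum of squared entries. -/
noncomputable def frobNorm {m n : Type*} [Fintype m] [Fintype n] (M : Matrix m n ℝ) : ℝ :=
  Real.sqrt (∑ i, ∑ j, (M i j) ^ 2)

lemma frobNorm_sq {m n : Type*} [Fintype m] [Fintype n] (M : Matrix m n ℝ) :
    frobNorm M ^ 2 = Matrix.trace (Mᵀ * M) := by
  rw [frobNorm, Real.sq_sqrt (by positivity)]
  simp only [Matrix.trace, Matrix.diag, Matrix.mul_apply, Matrix.transpose_apply, sq]
  exact Finset.sum_comm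

lemma trace_tt_nonneg {m n : Type*} [Fintype m] [Fintype n] (M : Matrix m n ℝ) :
    0 ≤ Matrix.trace (Mᵀ * M) := by
  rw [← frobNorm_sq]; positivity

lemma trace_restrict_le {N n m : Type*} [Fintype N] [Fintype n] [Fintype m] [DecidableEq m]
    (Z : Matrix N n ℝ) (V : Matrix n m ℝ) (hV : Vᵀ * V = 1) :
    Matrix.trace (Vᵀ * (Zᵀ * Z) * V) ≤ Matrix.trace (Zᵀ * Z) := by
  have h0 := trace_tt_nonneg (Z - Z * V * Vᵀ)
  have hexp : (Z - Z * V * Vᵀ)ᵀ * (Z - Z * V * Vᵀ)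
      = Zᵀ * Z - Zᵀ * (Z * V * Vᵀ) - ((Z * V * Vᵀ)ᵀ * Z - (Z * V * Vᵀ)ᵀ * (Z * V * Vᵀ)) := by
    rw [Matrix.transpose_sub, Matrix.sub_mul, Matrix.mul_sub, Matrix.mul_sub]
  rw [hexp, Matrix.trace_sub, Matrix.trace_sub, Matrix.trace_sub] at h0
  have e1 : Matrix.trace (Zᵀ * (Z * V * Vᵀ)) = Matrix.trace (Vᵀ * (Zᵀ * Z) * V) := by
    rw [show Zᵀ * (Z * V * Vᵀ) = (Zᵀ * Z * V) * Vᵀ by simp only [Matrix.mul_assoc],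
      Matrix.trace_mul_comm]
    congr 1
    simp only [Matrix.mul_assoc]
  have e2 : Matrix.trace ((Z * V * Vᵀ)ᵀ * Z) = Matrix.trace (Vᵀ * (Zᵀ * Z) * V) := by
    rw [show (Z * V * Vᵀ)ᵀ * Z = V * (Vᵀ * (Zᵀ * Z)) by simp only [Matrix.transpose_mul,
      Matrix.transpose_transpose, Matrix.mul_assoc], Matrix.trace_mul_comm]
  have e3 : Matrix.trace ((Z * V * Vᵀ)ᵀ * (Z * V * Vᵀ)) = Matrix.trace (Vᵀ * (Zᵀ * Z) * V) := by
    rw [show (Z * V * Vᵀ)ᵀ * (Z * V * Vᵀ) = V * ((Vᵀ * (Zᵀ * Z) * V) * Vᵀ) by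
      simp only [Matrix.transpose_mul, Matrix.transpose_transpose, Matrix.mul_assoc],
      Matrix.trace_mul_comm]
    rw [show Vᵀ * (Zᵀ * Z) * V * Vᵀ * V = Vᵀ * (Zᵀ * Z) * V * (Vᵀ * V) by
      simp only [Matrix.mul_assoc], hV, mul_one]
  rw [e1, e2, e3] at h0
  linarith

lemma filter_ge_card {n p : ℕ} (hp : p ≤ n) :
    (Finset.univ.filter (fun i : Fin n => p ≤ (i : ℕ))).card = n - p := by
  have h : (Finset.univ.filter (fun i : Fin n => p ≤ (i : ℕ)))
      = Finset.map ⟨fun k : Fin (n - p) => (⟨p + k, by omega⟩ : Fin n),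
          fun a b hab => by
            simp only [Fin.mk.injEq] at hab
            exact Fin.val_injective (by omega)⟩ Finset.univ := by
    ext i
    simp only [Finset.mem_filter, Finset.mem_map, Finset.mem_univ, true_and,
      Function.Embedding.coeFn_mk]
    constructor
    · intro hi
      exact ⟨⟨i - p, by omega⟩, by ext; show p + ((i : ℕ) - p) = (i : ℕ); omega⟩
    · rintro ⟨k, rfl⟩; exact Nat.le_add_right _ _
  rw [h, Finset.card_map]
  simp

lemma sum_lt_filter {n p : ℕ} (hp : p ≤ n) (μ : Fin n → ℝ) :
    ∑ i ∈ Finset.univ.filter (fun i : Fin n => ¬ p ≤ (i : ℕ)), μ i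
      = ∑ i : Fin p, μ (Fin.castLE hp i) := by
  rw [show Finset.univ.filter (fun i : Fin n => ¬ p ≤ (i : ℕ))
      = Finset.map (Fin.castLEEmb hp) Finset.univ by
    ext i
    simp only [Finset.mem_filter, Finset.mem_map, Finset.mem_univ, true_and, not_le]
    constructor
    · intro hi
      refine ⟨⟨(i : ℕ), hi⟩, ?_⟩
      ext
      simp [Fin.castLEEmb]
    · rintro ⟨k, rfl⟩
      simp only [Fin.coe_castLEEmb, Fin.coe_castLE]; exact k.2]
  rw [Finset.sum_map]
  rfl

-- trace of Wᵀ D W as weighted sum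
lemma trace_WDW {n m : Type*} [Fintype n] [Fintype m] [DecidableEq n]
    (μ : n → ℝ) (W : Matrix n m ℝ) :
    Matrix.trace (Wᵀ * Matrix.diagonal μ * W) = ∑ i, μ i * ∑ k, (W i k) ^ 2 := by
  simp only [Matrix.trace, Matrix.diag, Matrix.mul_apply, Matrix.transpose_apply,
    Matrix.diagonal_apply, mul_ite, mul_zero, ite_mul, zero_mul, Finset.sum_ite_eq,
    Finset.sum_ite_eq', Finset.mem_univ, if_true]
  rw [Finset.sum_comm]
  refine Finset.sum_congr rfl fun i _ => ?_
  rw [Finset.mul_sum]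
  refine Finset.sum_congr rfl fun k _ => ?_
  ring

-- diagonal entries of a symmetric idempotent are in [0,1]
lemma proj_diag_le_one {n : Type*} [Fintype n] [DecidableEq n]
    {m : Type*} [Fintype m] [DecidableEq m] (W : Matrix n m ℝ) (hW : Wᵀ * W = 1) (i : n) :
    (∑ k, (W i k) ^ 2) ≤ 1 := by
  set P := W * Wᵀ with hP
  have hPsymm : Pᵀ = P := by simp [hP, Matrix.transpose_mul]
  have hidem : P * P = P := by
    rw [hP, show W * Wᵀ * (W * Wᵀ) = W * (Wᵀ * W) * Wᵀ by simp only [Matrix.mul_assoc], hW,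
      Matrix.mul_one]
  have hPii : P i i = ∑ k, (W i k) ^ 2 := by
    simp [hP, Matrix.mul_apply, sq]
  have h1 : P i i = ∑ j, (P i j) ^ 2 := by
    conv_lhs => rw [← hidem]
    rw [Matrix.mul_apply]
    refine Finset.sum_congr rfl fun j _ => ?_
    have : P j i = P i j := by nth_rewrite 2 [← hPsymm]; rw [Matrix.transpose_apply]
    rw [this, sq]
  have h2 : (P i i) ^ 2 ≤ P i i := by
    conv_rhs => rw [h1]
    exact Finset.single_le_sum (f := fun j => (P i j) ^ 2) (fun j _ => sq_nonneg _) (Finset.mem_univ i)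
  have h3 : 0 ≤ P i i := by rw [hPii]; positivity
  nlinarith [hPii]
lemma kyfan {n p : ℕ} (hp : p ≤ n) (μ : Fin n → ℝ) (hμ : Antitone μ)
    (Q : Matrix (Fin n) (Fin n) ℝ) (hQ : Qᵀ * Q = 1)
    (V : Matrix (Fin n) (Fin (n - p)) ℝ) (hV : Vᵀ * V = 1) :
    ∑ i ∈ Finset.univ.filter (fun i : Fin n => p ≤ (i : ℕ)), μ i
      ≤ Matrix.trace (Vᵀ * (Q * Matrix.diagonal μ * Qᵀ) * V) := by
  rcases Nat.eq_zero_or_pos n with hn | hn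
  · subst hn
    have hp0 : p = 0 := Nat.le_zero.mp hp
    subst hp0
    simp [Matrix.trace, Finset.univ_eq_empty]
  set W := Qᵀ * V with hWdef
  have hQQt : Q * Qᵀ = 1 := mul_eq_one_comm.mp hQ
  have hW : Wᵀ * W = 1 := by
    rw [hWdef, Matrix.transpose_mul, Matrix.transpose_transpose,
      show Vᵀ * Q * (Qᵀ * V) = Vᵀ * (Q * Qᵀ) * V by simp only [Matrix.mul_assoc], hQQt,
      Matrix.mul_one, hV]
  have htr : Matrix.trace (Vᵀ * (Q * Matrix.diagonal μ * Qᵀ) * V)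
      = Matrix.trace (Wᵀ * Matrix.diagonal μ * W) := by
    rw [hWdef, Matrix.transpose_mul, Matrix.transpose_transpose]
    simp only [Matrix.mul_assoc]
  set t : Fin n → ℝ := fun i => ∑ k, (W i k) ^ 2 with ht
  have ht0 : ∀ i, 0 ≤ t i := fun i => by rw [ht]; positivity
  have ht1 : ∀ i, t i ≤ 1 := fun i => proj_diag_le_one W hW i
  have htsum : ∑ i, t i = ((n - p : ℕ) : ℝ) := by
    have h1 : Matrix.trace (W * Wᵀ) = ∑ i, t i := by
      simp [Matrix.trace, Matrix.diag, Matrix.mul_apply, ht, sq]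
    have h2 : Matrix.trace (W * Wᵀ) = ((n - p : ℕ) : ℝ) := by
      rw [Matrix.trace_mul_comm, hW, Matrix.trace_one]
      simp
    rw [← h1, h2]
  rw [htr, trace_WDW]
  set F := Finset.univ.filter (fun i : Fin n => p ≤ (i : ℕ)) with hF
  set Fc := Finset.univ.filter (fun i : Fin n => ¬ p ≤ (i : ℕ)) with hFc
  have hsplit : ∀ f : Fin n → ℝ, ∑ i ∈ F, f i + ∑ i ∈ Fc, f i = ∑ i, f i :=
    fun f => Finset.sum_filter_add_sum_filter_not _ _ f
  -- the pivot value
  have hpn : p - 1 < n := by omega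
  set c : ℝ := μ ⟨p - 1, hpn⟩ with hc
  have hc1 : ∀ i ∈ Fc, c ≤ μ i := by
    intro i hi
    rw [hFc, Finset.mem_filter] at hi
    exact hμ (by rw [Fin.le_def]; simp only; omega)
  have hc2 : ∀ i ∈ F, μ i ≤ c := by
    intro i hi
    rw [hF, Finset.mem_filter] at hi
    exact hμ (by rw [Fin.le_def]; simp only; omega)
  have S1 : ∑ i ∈ Fc, c * t i ≤ ∑ i ∈ Fc, μ i * t i :=
    Finset.sum_le_sum fun i hi => mul_le_mul_of_nonneg_right (hc1 i hi) (ht0 i)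
  have S2 : ∑ i ∈ F, (μ i - μ i * t i) ≤ ∑ i ∈ F, (c - c * t i) := by
    refine Finset.sum_le_sum fun i hi => ?_
    have := mul_le_mul_of_nonneg_right (hc2 i hi) (sub_nonneg.mpr (ht1 i))
    nlinarith [this]
  have hsum_sub : ∀ (s : Finset (Fin n)) (f g : Fin n → ℝ),
      ∑ i ∈ s, (f i - g i) = ∑ i ∈ s, f i - ∑ i ∈ s, g i := fun s f g => Finset.sum_sub_distrib _ _
  rw [hsum_sub, hsum_sub] at S2
  have hconst : ∑ i ∈ F, c = ((n - p : ℕ) : ℝ) * c := by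
    rw [Finset.sum_const, nsmul_eq_mul, hF, filter_ge_card hp]
  have hmulsum : ∀ s : Finset (Fin n), ∑ i ∈ s, c * t i = c * ∑ i ∈ s, t i :=
    fun s => (Finset.mul_sum _ _ _).symm
  rw [hmulsum] at S1 S2
  rw [hconst] at S2
  have hfold : ∑ i, μ i * ∑ k, (W i k) ^ 2 = ∑ i, μ i * t i := rfl
  have hts : ∑ i ∈ F, t i + ∑ i ∈ Fc, t i = ((n - p : ℕ) : ℝ) := by
    rw [hsplit, htsum]
  have hgoal := hsplit (fun i => μ i * t i)
  have hts' : c * ∑ i ∈ F, t i + c * ∑ i ∈ Fc, t i = ((n - p : ℕ) : ℝ) * c := by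
    rw [← mul_add, hts]; ring
  rw [hfold]
  linarith [S1, S2, hgoal, hts']

lemma exists_kernel_V {n p : ℕ} (hp : p ≤ n) (B : Matrix (Fin n) (Fin p) ℝ) :
    ∃ V : Matrix (Fin n) (Fin (n - p)) ℝ, Vᵀ * V = 1 ∧ Bᵀ * V = 0 := by
  classical
  let f : EuclideanSpace ℝ (Fin n) →ₗ[ℝ] (Fin p → ℝ) :=
    Bᵀ.mulVecLin ∘ₗ (WithLp.linearEquiv 2 ℝ (Fin n → ℝ)).toLinearMap
  have hrank : n - p ≤ Module.finrank ℝ (LinearMap.ker f) := by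
    have h1 := LinearMap.finrank_range_add_finrank_ker f
    have h2 : Module.finrank ℝ (LinearMap.range f) ≤ p := by
      have := Submodule.finrank_le (LinearMap.range f)
      simpa using this
    have h3 : Module.finrank ℝ (EuclideanSpace ℝ (Fin n)) = n := by simp
    omega
  let ob := stdOrthonormalBasis ℝ (LinearMap.ker f)
  let g : Fin (n - p) → EuclideanSpace ℝ (Fin n) :=
    fun k => (ob (Fin.castLE hrank k) : EuclideanSpace ℝ (Fin n))
  have hg_on : Orthonormal ℝ g := by
    have h1 : Orthonormal ℝ (fun i => ((ob i : LinearMap.ker f) : EuclideanSpace ℝ (Fin n))) := by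
      rw [orthonormal_iff_ite] at *
      intro i j
      rw [← Submodule.coe_inner]
      exact (orthonormal_iff_ite.mp ob.orthonormal) i j
    exact h1.comp _ (Fin.castLE_injective hrank)
  have hg_ker : ∀ k, Bᵀ *ᵥ (g k) = 0 := by
    intro k
    have : f (g k) = 0 := (LinearMap.mem_ker).mp (ob (Fin.castLE hrank k)).2
    simpa [f, Matrix.mulVecLin, Matrix.mulVec_transpose] using this
  refine ⟨Matrix.of (fun j k => g k j), ?_, ?_⟩
  · ext k l
    have := (orthonormal_iff_ite.mp hg_on) k l
    rw [PiLp.inner_apply] at this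
    simp only [RCLike.inner_apply, starRingEnd_apply, star_trivial] at this
    simp only [Matrix.mul_apply, Matrix.transpose_apply, Matrix.of_apply, Matrix.one_apply]
    rw [← this]; exact Finset.sum_congr rfl fun _ _ => mul_comm _ _
  · ext i k
    have := congrFun (hg_ker k) i
    simpa [Matrix.mul_apply, Matrix.mulVec, dotProduct] using this

/-- Optimality of PCA for the linear autoencoder (after Baldi–Hornik).
Let `μ₀ ≥ μ₁ ≥ ⋯ ≥ μ_{n-1}` be the eigenvalues of `Xᵀ X` in non-increasing order
(witnessed by an orthogonal eigendecomposition `Xᵀ X = Q diag(μ) Qᵀ` with `μ` antitone),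
and let `Up` have orthonormal columns that are eigenvectors of `Xᵀ X` for the `p`
largest eigenvalues `μ₀, …, μ_{p-1}`. Then for all real `n×p` matrices `A` and `B`,
`‖X − X A Bᵀ‖_F² ≥ ‖X − X Up Upᵀ‖_F² = μ_p + ⋯ + μ_{n-1}`. -/
theorem linear_autoencoder_pca_optimal {N n p : ℕ} (hp : p ≤ n)
    (X : Matrix (Fin N) (Fin n) ℝ)
    (μ : Fin n → ℝ) (Q : Matrix (Fin n) (Fin n) ℝ)
    (hμ : Antitone μ)
    (hQ : Qᵀ * Q = 1)
    (hEigQ : Xᵀ * X = Q * Matrix.diagonal μ * Qᵀ)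
    (Up : Matrix (Fin n) (Fin p) ℝ)
    (hUp : Upᵀ * Up = 1)
    (hEigU : ∀ i : Fin p,
      (Xᵀ * X) *ᵥ (fun j => Up j i) = μ (Fin.castLE hp i) • (fun j => Up j i)) :
    (∀ A B : Matrix (Fin n) (Fin p) ℝ,
        (frobNorm (X - X * Up * Upᵀ)) ^ 2 ≤ (frobNorm (X - X * A * Bᵀ)) ^ 2) ∧
      (frobNorm (X - X * Up * Upᵀ)) ^ 2 =
        ∑ i ∈ Finset.univ.filter (fun i : Fin n => p ≤ (i : ℕ)), μ i := by

  -- the p-truncated diagonal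
  set D' : Matrix (Fin p) (Fin p) ℝ := Matrix.diagonal (fun i => μ (Fin.castLE hp i)) with hD'
  have hSU : (Xᵀ * X) * Up = Up * D' := by
    ext j i
    have h := congrFun (hEigU i) j
    simp only [Matrix.mulVec, dotProduct, Pi.smul_apply, smul_eq_mul] at h
    rw [Matrix.mul_apply, Matrix.mul_diagonal]
    rw [h]; ring
  -- equality part
  have heq : (frobNorm (X - X * Up * Upᵀ)) ^ 2 =
      ∑ i ∈ Finset.univ.filter (fun i : Fin n => p ≤ (i : ℕ)), μ i := by
    rw [frobNorm_sq]
    have hexp : (X - X * Up * Upᵀ)ᵀ * (X - X * Up * Upᵀ)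
        = Xᵀ * X - Xᵀ * (X * Up * Upᵀ)
          - ((X * Up * Upᵀ)ᵀ * X - (X * Up * Upᵀ)ᵀ * (X * Up * Upᵀ)) := by
      rw [Matrix.transpose_sub, Matrix.sub_mul, Matrix.mul_sub, Matrix.mul_sub]
    rw [hexp, Matrix.trace_sub, Matrix.trace_sub, Matrix.trace_sub]
    have e1 : Matrix.trace (Xᵀ * (X * Up * Upᵀ)) = Matrix.trace D' := by
      rw [show Xᵀ * (X * Up * Upᵀ) = ((Xᵀ * X) * Up) * Upᵀ by simp only [Matrix.mul_assoc], hSU,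
        Matrix.trace_mul_comm, show Upᵀ * (Up * D') = (Upᵀ * Up) * D' by
          simp only [Matrix.mul_assoc], hUp, Matrix.one_mul]
    have e2 : Matrix.trace ((X * Up * Upᵀ)ᵀ * X) = Matrix.trace D' := by
      rw [show (X * Up * Upᵀ)ᵀ * X = Up * (Upᵀ * (Xᵀ * X)) by
        simp only [Matrix.transpose_mul, Matrix.transpose_transpose, Matrix.mul_assoc],
        Matrix.trace_mul_comm,
        show Upᵀ * (Xᵀ * X) * Up = Upᵀ * (Xᵀ * X * Up) by simp only [Matrix.mul_assoc], hSU,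
        show Upᵀ * (Up * D') = (Upᵀ * Up) * D' by simp only [Matrix.mul_assoc], hUp,
        Matrix.one_mul]
    have e3 : Matrix.trace ((X * Up * Upᵀ)ᵀ * (X * Up * Upᵀ)) = Matrix.trace D' := by
      have h1 : (X * Up * Upᵀ)ᵀ * (X * Up * Upᵀ) = Up * ((Upᵀ * ((Xᵀ * X) * Up)) * Upᵀ) := by
        simp only [Matrix.transpose_mul, Matrix.transpose_transpose, Matrix.mul_assoc]
      rw [h1, hSU, show Upᵀ * (Up * D') = (Upᵀ * Up) * D' by simp only [Matrix.mul_assoc], hUp,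
        Matrix.one_mul, Matrix.trace_mul_comm, show D' * Upᵀ * Up = D' * (Upᵀ * Up) by
          simp only [Matrix.mul_assoc], hUp, Matrix.mul_one]
    have e0 : Matrix.trace (Xᵀ * X) = ∑ i, μ i := by
      rw [hEigQ, Matrix.trace_mul_comm, show Qᵀ * (Q * Matrix.diagonal μ) =
        (Qᵀ * Q) * Matrix.diagonal μ by simp only [Matrix.mul_assoc], hQ, Matrix.one_mul,
        Matrix.trace_diagonal]
    have eD : Matrix.trace D' = ∑ i : Fin p, μ (Fin.castLE hp i) := by
      rw [hD', Matrix.trace_diagonal]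
    rw [e0, e1, e2, e3, eD, ← sum_lt_filter hp μ]
    rw [← Finset.sum_filter_add_sum_filter_not Finset.univ (fun i : Fin n => p ≤ (i : ℕ)) μ]
    ring
  refine ⟨?_, heq⟩
  intro A B
  obtain ⟨V, hV1, hV2⟩ := exists_kernel_V hp B
  rw [heq]
  have h1 := kyfan hp μ hμ Q hQ V hV1
  rw [← hEigQ] at h1
  set Z := X - X * A * Bᵀ with hZ
  have hZV : Z * V = X * V := by
    rw [hZ, Matrix.sub_mul, show X * A * Bᵀ * V = X * A * (Bᵀ * V) by
      simp only [Matrix.mul_assoc], hV2, Matrix.mul_zero, sub_zero]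
  have h2 : Vᵀ * (Xᵀ * X) * V = Vᵀ * (Zᵀ * Z) * V := by
    have l : (X * V)ᵀ * (X * V) = Vᵀ * (Xᵀ * X) * V := by
      simp only [Matrix.transpose_mul, Matrix.mul_assoc]
    have r : (Z * V)ᵀ * (Z * V) = Vᵀ * (Zᵀ * Z) * V := by
      simp only [Matrix.transpose_mul, Matrix.mul_assoc]
    rw [← l, ← r, hZV]
  rw [h2] at h1
  calc ∑ i ∈ Finset.univ.filter (fun i : Fin n => p ≤ (i : ℕ)), μ i
      ≤ Matrix.trace (Vᵀ * (Zᵀ * Z) * V) := h1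
    _ ≤ Matrix.trace (Zᵀ * Z) := trace_restrict_le Z V hV1
    _ = (frobNorm Z) ^ 2 := (frobNorm_sq Z).symm
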